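/- Let p be an odd prime, P = ⟨x⟩ cyclic of order p, k an algebraically closed field of characteristic p, and set w = Σ_{i=1}^{p−1} i^{−1} x^i ∈ kP, where i^{−1} is the inverse of i in k. Then: (a) w lies in the Jacobson radical J(kP); (b) w does not lie in J(kP)^2, so w generates J(kP) as an ideal; (c) w^p = 0; and (d) the set {1, w, w^2, …, w^{p−1}} is a k-basis of kP. -/

import Mathlib

open MonoidAlgebra

/-- Let `p` be an odd prime, `P = ⟨x⟩` cyclic of order `p`, `k` an
algebraically closed field of characteristic `p`, and `w = Σ_{i=1}^{p−1} i⁻¹ xⁱ ∈ kP`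
(inverses taken in `k`).  Then (a) `w` lies in the Jacobson radical `J(kP)`;
(b) `w ∉ J(kP)²`, and indeed `w` generates `J(kP)` as an ideal; (c) `w ^ p = 0`; and
(d) `{1, w, w², …, w^{p−1}}` is a `k`-basis of `kP`. -/
theorem radical_generator_cyclic_p
    (p : ℕ) (hp : p.Prime) (hodd : p ≠ 2)
    (k : Type*) [Field k] [CharP k p] [IsAlgClosed k] :
    ∀ w : MonoidAlgebra k (Multiplicative (ZMod p)),
      w = ∑ i ∈ Finset.Ico 1 p,
            ((i : k))⁻¹ • MonoidAlgebra.of k (Multiplicative (ZMod p))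
              (Multiplicative.ofAdd (i : ZMod p)) →
      w ∈ (⊥ : Ideal (MonoidAlgebra k (Multiplicative (ZMod p)))).jacobson ∧
      w ∉ ((⊥ : Ideal (MonoidAlgebra k (Multiplicative (ZMod p)))).jacobson) ^ 2 ∧
      Ideal.span {w} = (⊥ : Ideal (MonoidAlgebra k (Multiplicative (ZMod p)))).jacobson ∧
      w ^ p = 0 ∧
      LinearIndependent k (fun n : Fin p => w ^ (n : ℕ)) ∧
      Submodule.span k (Set.range fun n : Fin p => w ^ (n : ℕ)) = ⊤ := by
  haveI : Fact p.Prime := ⟨hp⟩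
  haveI : NeZero p := ⟨hp.ne_zero⟩
  intro w hw
  set x : (MonoidAlgebra k (Multiplicative (ZMod p))) := MonoidAlgebra.of k (Multiplicative (ZMod p)) (Multiplicative.ofAdd (1 : ZMod p)) with hxdef
  set u : (MonoidAlgebra k (Multiplicative (ZMod p))) := x - 1 with hudef
  -- basic instances
  haveI : CharP (MonoidAlgebra k (Multiplicative (ZMod p))) p :=
    charP_of_injective_algebraMap (R := k) (fun a b h => by
      have h' : Finsupp.single (1 : Multiplicative (ZMod p)) a = Finsupp.single 1 b := congrArg _ ((algebraMap k _).injective h)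
      exact Finsupp.single_injective _ h') p
  let b : Module.Basis (Multiplicative (ZMod p)) k (MonoidAlgebra k (Multiplicative (ZMod p))) := MonoidAlgebra.basis _ k
  haveI : Module.Finite k (MonoidAlgebra k (Multiplicative (ZMod p))) := Module.Finite.of_basis b
  have hcard : Fintype.card (Multiplicative (ZMod p)) = p := by
    rw [Fintype.card_congr Multiplicative.toAdd, ZMod.card]
  have hfr : Module.finrank k (MonoidAlgebra k (Multiplicative (ZMod p))) = p := by
    rw [Module.finrank_eq_card_basis b, hcard]
  -- powers of x
  have hx_pow : ∀ n : ℕ, x ^ n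
      = MonoidAlgebra.of k (Multiplicative (ZMod p)) (Multiplicative.ofAdd ((n : ZMod p))) := by
    intro n
    rw [hxdef, ← map_pow]
    congr 1
    rw [← ofAdd_nsmul]
    congr 1
    rw [nsmul_eq_mul, mul_one]
  have hxp : x ^ p = 1 := by
    rw [hx_pow p, ZMod.natCast_self, ofAdd_zero, map_one]
  have hup : u ^ p = 0 := by
    rw [hudef, sub_pow_char, hxp, one_pow, sub_self]
  have hx1 : x = 1 + u := by rw [hudef]; ring
  -- x^n - 1 ∈ (u)
  have hxn : ∀ n : ℕ, x ^ n - 1 ∈ Ideal.span {u} := by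
    intro n
    induction n with
    | zero => simp
    | succ n ih =>
      have h : x ^ (n + 1) - 1 = (x ^ n - 1) * x + (x - 1) := by ring
      rw [h, ← hudef]
      exact add_mem (Ideal.mul_mem_right _ _ ih) (Ideal.mem_span_singleton_self u)
  have hofeq : ∀ g : Multiplicative (ZMod p),
      MonoidAlgebra.of k (Multiplicative (ZMod p)) g = x ^ (Multiplicative.toAdd g).val := by
    intro g
    rw [hx_pow, ZMod.natCast_val, ZMod.cast_id]
    rw [ofAdd_toAdd]
  -- augmentation map
  set ε : (MonoidAlgebra k (Multiplicative (ZMod p))) →ₐ[k] k := (MonoidAlgebra.lift k k (Multiplicative (ZMod p))) 1 with hεdef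
  have hε_single : ∀ (g : Multiplicative (ZMod p)) (c : k),
      ε (MonoidAlgebra.single g c) = c := by
    intro g c
    rw [hεdef, MonoidAlgebra.lift_single]
    simp
  have hε_surj : Function.Surjective ε := by
    intro c
    exact ⟨algebraMap k (MonoidAlgebra k (Multiplicative (ZMod p))) c, by simpa using ε.commutes c⟩
  have claim : ∀ a : (MonoidAlgebra k (Multiplicative (ZMod p))), a - algebraMap k (MonoidAlgebra k (Multiplicative (ZMod p))) (ε a) ∈ Ideal.span {u} := by
    intro a
    induction a using MonoidAlgebra.induction_on with
    | of g =>
      have h1 : ε (MonoidAlgebra.of k (Multiplicative (ZMod p)) g) = 1 := hε_single g 1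
      rw [h1, map_one]
      rw [hofeq g]
      exact hxn _
    | add f g hf hg =>
      have : f + g - algebraMap k (MonoidAlgebra k (Multiplicative (ZMod p))) (ε (f + g))
          = (f - algebraMap k (MonoidAlgebra k (Multiplicative (ZMod p))) (ε f)) + (g - algebraMap k (MonoidAlgebra k (Multiplicative (ZMod p))) (ε g)) := by
        rw [map_add, map_add]; ring
      rw [this]; exact add_mem hf hg
    | smul r f hf =>
      have : r • f - algebraMap k (MonoidAlgebra k (Multiplicative (ZMod p))) (ε (r • f))
          = algebraMap k (MonoidAlgebra k (Multiplicative (ZMod p))) r * (f - algebraMap k (MonoidAlgebra k (Multiplicative (ZMod p))) (ε f)) := by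
        rw [map_smul, smul_eq_mul, map_mul, Algebra.smul_def]; ring
      rw [this]
      exact Ideal.mul_mem_left _ _ hf
  -- Jacobson radical is (u)
  have hJ : (⊥ : Ideal (MonoidAlgebra k (Multiplicative (ZMod p)))).jacobson = Ideal.span {u} := by
    apply le_antisymm
    · have hmax : (RingHom.ker ε).IsMaximal := RingHom.ker_isMaximal_of_surjective ε hε_surj
      have h1 : (⊥ : Ideal (MonoidAlgebra k (Multiplicative (ZMod p)))).jacobson ≤ RingHom.ker ε := sInf_le ⟨bot_le, hmax⟩
      intro a ha
      have h2 : ε a = 0 := h1 ha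
      have h3 := claim a
      rwa [h2, map_zero, sub_zero] at h3
    · rw [Ideal.span_le]
      intro z hz
      rw [Set.mem_singleton_iff] at hz
      subst hz
      rw [SetLike.mem_coe, Ideal.mem_jacobson_bot]
      intro y
      have hn : IsNilpotent (u * y) := (Commute.all u y).isNilpotent_mul_right ⟨p, hup⟩
      have h2 : IsUnit (1 - -(u * y)) := hn.neg.isUnit_one_sub
      simpa [sub_neg_eq_add, add_comm] using h2
  -- binomial approximation
  have hbin : ∀ i : ℕ, x ^ i - (1 + (i : (MonoidAlgebra k (Multiplicative (ZMod p)))) * u) ∈ Ideal.span {u ^ 2} := by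
    intro i
    induction i with
    | zero => simp
    | succ n ih =>
      have key : x ^ (n + 1) - (1 + ((n + 1 : ℕ) : (MonoidAlgebra k (Multiplicative (ZMod p)))) * u)
          = (x ^ n - (1 + (n : (MonoidAlgebra k (Multiplicative (ZMod p)))) * u)) * x + (n : (MonoidAlgebra k (Multiplicative (ZMod p)))) * u ^ 2 := by
        push_cast
        rw [hx1]; ring
      rw [key]
      exact add_mem (Ideal.mul_mem_right _ _ ih)
        (Ideal.mul_mem_left _ _ (Ideal.mem_span_singleton_self _))
  -- sums in k
  have hne : ∀ i ∈ Finset.Ico 1 p, (i : k) ≠ 0 := by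
    intro i hi
    have hi' := Finset.mem_Ico.mp hi
    rw [Ne, CharP.cast_eq_zero_iff k p]
    exact Nat.not_dvd_of_pos_of_lt hi'.1 hi'.2
  have hsum0 : ∑ i ∈ Finset.Ico 1 p, ((i : k))⁻¹ = 0 := by
    apply Finset.sum_involution (fun i _ => p - i)
    · intro i hi
      have hi' := Finset.mem_Ico.mp hi
      have h1 : ((p - i : ℕ) : k) = -(i : k) := by
        rw [Nat.cast_sub hi'.2.le, CharP.cast_eq_zero, zero_sub]
      rw [h1, inv_neg]
      ring
    · intro i hi _
      have hi' := Finset.mem_Ico.mp hi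
      intro heq
      have h2 : (2 : ℕ) ∣ p := ⟨i, by omega⟩
      rcases (hp.eq_one_or_self_of_dvd 2 h2) with h | h
      · omega
      · exact hodd h.symm
    · intro i hi
      have hi' := Finset.mem_Ico.mp hi
      rw [Finset.mem_Ico]
      omega
    · intro i hi
      have hi' := Finset.mem_Ico.mp hi
      omega
  have hsum1 : ∑ i ∈ Finset.Ico 1 p, ((i : k))⁻¹ * (i : k) = -1 := by
    have h1 : ∀ i ∈ Finset.Ico 1 p, ((i : k))⁻¹ * (i : k) = 1 := fun i hi =>
      inv_mul_cancel₀ (hne i hi)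
    rw [Finset.sum_congr rfl h1, Finset.sum_const, Nat.card_Ico, nsmul_eq_mul, mul_one,
      Nat.cast_sub hp.one_lt.le, CharP.cast_eq_zero, zero_sub, Nat.cast_one]
  -- w = -u mod u^2
  have hw' : w = ∑ i ∈ Finset.Ico 1 p, ((i : k))⁻¹ • x ^ i := by
    rw [hw]
    exact Finset.sum_congr rfl fun i _ => by rw [hx_pow i]
  have hrw : ∑ i ∈ Finset.Ico 1 p, ((i : k))⁻¹ • (x ^ i - (1 + (i : (MonoidAlgebra k (Multiplicative (ZMod p)))) * u)) = w + u := by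
    have e1 : ∀ i ∈ Finset.Ico 1 p, ((i : k))⁻¹ • (x ^ i - (1 + (i : (MonoidAlgebra k (Multiplicative (ZMod p)))) * u))
        = ((i : k))⁻¹ • x ^ i - (((i : k))⁻¹ • (1 : (MonoidAlgebra k (Multiplicative (ZMod p)))) + (((i : k))⁻¹ * (i : k)) • u) := by
      intro i _
      have h2 : (i : (MonoidAlgebra k (Multiplicative (ZMod p)))) * u = (i : k) • u := by
        rw [← map_natCast (algebraMap k (MonoidAlgebra k (Multiplicative (ZMod p)))) i, ← Algebra.smul_def]
      rw [smul_sub, smul_add, h2, smul_smul]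
    rw [Finset.sum_congr rfl e1, Finset.sum_sub_distrib, Finset.sum_add_distrib,
      ← Finset.sum_smul, ← Finset.sum_smul, hsum0, hsum1, zero_smul, ← hw',
      neg_smul, one_smul, zero_add, sub_neg_eq_add]
  have hw2 : w + u ∈ Ideal.span {u ^ 2} := by
    rw [← hrw]
    exact Submodule.sum_mem _ fun i hi => by
      rw [Algebra.smul_def]
      exact Ideal.mul_mem_left _ _ (hbin i)
  obtain ⟨t, ht⟩ : ∃ t, w + u = u ^ 2 * t := Ideal.mem_span_singleton.mp hw2
  set v : (MonoidAlgebra k (Multiplicative (ZMod p))) := u * t - 1 with hvdef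
  have hwu : w = u * v := by rw [hvdef]; linear_combination ht
  have hv : IsUnit v := by
    have hn : IsNilpotent (u * t) := (Commute.all u t).isNilpotent_mul_right ⟨p, hup⟩
    have h2 : IsUnit (1 - u * t) := hn.isUnit_one_sub
    have h3 : IsUnit (-(1 - u * t)) := h2.neg
    rw [neg_sub] at h3
    exact h3
  have huv : u = w * ↑hv.unit⁻¹ := by
    rw [hwu, mul_assoc, hv.mul_val_inv, mul_one]
  -- spanning by powers of u
  have hpow_mem : ∀ n : ℕ, n < p →
      x ^ n ∈ Submodule.span k (Set.range fun m : Fin p => u ^ (m : ℕ)) := by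
    intro n hn
    rw [hx1, add_comm, add_pow]
    apply Submodule.sum_mem
    intro j hj
    have hj' : j < p := lt_of_le_of_lt (Nat.lt_succ_iff.mp (Finset.mem_range.mp hj)) hn
    have h2 : u ^ j * 1 ^ (n - j) * ((n.choose j : ℕ) : (MonoidAlgebra k (Multiplicative (ZMod p)))) = (n.choose j) • u ^ j := by
      rw [one_pow, mul_one, mul_comm, ← nsmul_eq_mul]
    rw [h2]
    exact Submodule.smul_of_tower_mem _ _
      (Submodule.subset_span ⟨⟨j, hj'⟩, rfl⟩)
  have hspan_u : Submodule.span k (Set.range fun n : Fin p => u ^ (n : ℕ)) = ⊤ := by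
    rw [eq_top_iff, ← b.span_eq]
    apply Submodule.span_le.mpr
    rintro z ⟨g, rfl⟩
    have hb : b g = MonoidAlgebra.of k (Multiplicative (ZMod p)) g := rfl
    rw [hb, hofeq g]
    exact hpow_mem _ (ZMod.val_lt _)
  have li_u : LinearIndependent k (fun n : Fin p => u ^ (n : ℕ)) :=
    linearIndependent_of_top_le_span_of_card_eq_finrank (hspan_u ▸ le_rfl)
      (by rw [Fintype.card_fin, hfr])
  have hu_ne : u ^ (p - 1) ≠ 0 := by
    have h1 := li_u.ne_zero ⟨p - 1, by have := hp.pos; omega⟩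
    simpa using h1
  have hw_ne : w ^ (p - 1) ≠ 0 := by
    intro h0
    apply hu_ne
    have h1 : u ^ (p - 1) * v ^ (p - 1) = 0 := by rw [← mul_pow, ← hwu, h0]
    exact ((hv.pow (p - 1)).mul_left_eq_zero).mp h1
  have hwp : w ^ p = 0 := by rw [hwu, mul_pow, hup, zero_mul]
  -- linear independence of powers of w
  have li_w : LinearIndependent k (fun n : Fin p => w ^ (n : ℕ)) := by
    rw [Fintype.linearIndependent_iff]
    intro g hg
    have key : ∀ n, ∀ hn : n < p, g ⟨n, hn⟩ = 0 := by
      intro n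
      induction n using Nat.strong_induction_on with
      | _ n ih =>
        intro hn
        have hmul : (∑ i : Fin p, g i • w ^ (i : ℕ)) * w ^ (p - 1 - n) = 0 := by
          rw [hg, zero_mul]
        rw [Finset.sum_mul] at hmul
        have hsingle : ∀ i : Fin p, i ∈ Finset.univ → i ≠ ⟨n, hn⟩ →
            g i • w ^ (i : ℕ) * w ^ (p - 1 - n) = 0 := by
          intro i _ hne'
          have hne2 : (i : ℕ) ≠ n := fun h => hne' (Fin.ext h)
          rcases hne2.lt_or_gt with hlt | hgt
          · have h1 := ih i hlt i.isLt
            rw [Fin.eta] at h1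
            rw [h1, zero_smul, zero_mul]
          · have h1 : w ^ (i : ℕ) * w ^ (p - 1 - n) = 0 := by
              rw [← pow_add]
              exact pow_eq_zero_of_le (by omega) hwp
            rw [smul_mul_assoc, h1, smul_zero]
        rw [Finset.sum_eq_single_of_mem ⟨n, hn⟩ (Finset.mem_univ _) hsingle,
          smul_mul_assoc, ← pow_add] at hmul
        have h2 : n + (p - 1 - n) = p - 1 := by omega
        rw [h2] at hmul
        rcases smul_eq_zero.mp hmul with h | h
        · exact h
        · exact absurd h hw_ne
    intro i
    have h3 := key i i.isLt
    rwa [Fin.eta] at h3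
  haveI : Nonempty (Fin p) := ⟨⟨0, hp.pos⟩⟩
  have hspan_w : Submodule.span k (Set.range fun n : Fin p => w ^ (n : ℕ)) = ⊤ :=
    li_w.span_eq_top_of_card_eq_finrank (by rw [Fintype.card_fin, hfr])
  -- assemble
  refine ⟨?_, ?_, ?_, hwp, li_w, hspan_w⟩
  · rw [hJ]
    exact Ideal.mem_span_singleton.mpr ⟨v, hwu⟩
  · intro hm
    rw [hJ, Ideal.span_singleton_pow] at hm
    obtain ⟨s0, hs0⟩ := Ideal.mem_span_singleton.mp hm
    have hs : u = u ^ 2 * (s0 * ↑hv.unit⁻¹) := by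
      conv_lhs => rw [huv]
      rw [hs0]; ring
    set s : MonoidAlgebra k (Multiplicative (ZMod p)) := s0 * ↑hv.unit⁻¹ with hsdef
    have hunit : IsUnit (1 - u * s) :=
      ((Commute.all u s).isNilpotent_mul_right ⟨p, hup⟩).isUnit_one_sub
    have h0 : u * (1 - u * s) = 0 := by linear_combination hs
    have hu0 : u = 0 := (IsUnit.mul_left_eq_zero hunit).mp h0
    exact hu_ne (by rw [hu0, zero_pow (by have := hp.two_le; omega)])
  · rw [hJ]
    apply le_antisymm
    · rw [Ideal.span_le]
      intro z hz
      rw [Set.mem_singleton_iff] at hz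
      subst hz
      exact Ideal.mem_span_singleton.mpr ⟨v, hwu⟩
    · rw [Ideal.span_le]
      intro z hz
      rw [Set.mem_singleton_iff] at hz
      subst hz
      exact Ideal.mem_span_singleton.mpr ⟨↑hv.unit⁻¹, huv⟩
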